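/- Let N ≥ 2 and let y₁, …, y_{N−1} be real numbers with 0 ≤ y_i ≤ 1 for all i. Set S := 1 + ∑_{i=1}^{N−1} y_i. Then ∑_{k=1}^{N−1} y_k / ((N − k)·(1 + ∑_{i=1}^{k} y_i)) ≤ (4·log S + 5) / max{S − 1, 1}. -/

import Mathlib

open Finset

private lemma logdiff {a b : ℝ} (ha : 0 < a) (hab : a ≤ b) :
    (b - a) / b ≤ Real.log b - Real.log a := by
  have hb : 0 < b := lt_of_lt_of_le ha hab
  have h := Real.log_le_sub_one_of_pos (show 0 < a / b from div_pos ha hb)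
  rw [Real.log_div (ne_of_gt ha) (ne_of_gt hb)] at h
  have h2 : (b - a) / b = 1 - a / b := by field_simp
  linarith

private lemma tele (g : ℕ → ℝ) : ∀ a b : ℕ, 1 ≤ a → a ≤ b + 1 →
    ∑ k ∈ Icc a b, (g k - g (k - 1)) = g b - g (a - 1) := by
  intro a b
  induction b with
  | zero =>
    intro h1 h2
    have : a = 1 := by omega
    subst this; simp
  | succ n ih =>
    intro h1 h2
    by_cases h : a ≤ n + 1
    · rw [Finset.sum_Icc_succ_top h, ih h1 h]
      simp only [Nat.add_sub_cancel]
      ring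
    · have ha : a = n + 2 := by omega
      subst ha
      rw [Finset.Icc_eq_empty (by omega)]
      simp


set_option maxHeartbeats 1000000 in
/-- Lemma 2 (key lemma): for `0 ≤ y_i ≤ 1` and `S = 1 + ∑_{i=1}^{N−1} y_i`,
`∑_{k=1}^{N−1} y_k/((N−k)(1 + ∑_{i=1}^{k} y_i)) ≤ (4·log S + 5)/max{S − 1, 1}`. -/
theorem key_series_bound
    (N : ℕ) (hN : 2 ≤ N) (y : ℕ → ℝ)
    (hy0 : ∀ i, 1 ≤ i → i ≤ N - 1 → 0 ≤ y i)
    (hy1 : ∀ i, 1 ≤ i → i ≤ N - 1 → y i ≤ 1) :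
    ∑ k ∈ Icc 1 (N - 1),
        y k / (((N : ℝ) - (k : ℝ)) * (1 + ∑ i ∈ Icc 1 k, y i)) ≤
      (4 * Real.log (1 + ∑ i ∈ Icc 1 (N - 1), y i) + 5) /
        max ((1 + ∑ i ∈ Icc 1 (N - 1), y i) - 1) 1 := by
  classical
  set s : ℕ → ℝ := fun k => 1 + ∑ i ∈ Icc 1 k, y i with hs
  set S : ℝ := s (N - 1) with hSdef
  show ∑ k ∈ Icc 1 (N - 1), y k / (((N : ℝ) - (k : ℝ)) * s k) ≤
      (4 * Real.log S + 5) / max (S - 1) 1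
  -- basic facts
  have hy0' : ∀ i ∈ Icc 1 (N - 1), 0 ≤ y i := fun i hi => by
    obtain ⟨h1, h2⟩ := mem_Icc.mp hi; exact hy0 i h1 h2
  have hs1 : ∀ k, k ≤ N - 1 → 1 ≤ s k := by
    intro k hk
    have : 0 ≤ ∑ i ∈ Icc 1 k, y i :=
      Finset.sum_nonneg fun i hi => by
        obtain ⟨h1, h2⟩ := mem_Icc.mp hi; exact hy0 i h1 (h2.trans hk)
    simp only [hs]; linarith
  have hS1 : 1 ≤ S := hs1 _ le_rfl
  have hstep : ∀ k, 1 ≤ k → s k = s (k - 1) + y k := by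
    intro k hk
    obtain ⟨j, rfl⟩ : ∃ j, k = j + 1 := ⟨k - 1, by omega⟩
    simp only [hs, Nat.add_sub_cancel]
    rw [Finset.sum_Icc_succ_top (by omega)]
    ring
  have hsS : ∀ k, k ≤ N - 1 → s k ≤ S := by
    intro k hk
    simp only [hs, hSdef]
    have := Finset.sum_le_sum_of_subset_of_nonneg
      (Finset.Icc_subset_Icc_right hk) (fun i hi _ => hy0' i hi)
    linarith
  have hgap : ∀ k, k ≤ N - 1 → S - s k ≤ (N : ℝ) - 1 - k := by
    intro k hk
    have hsplit : (∑ i ∈ Ioc 0 k, y i) + ∑ i ∈ Ioc k (N - 1), y i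
        = ∑ i ∈ Ioc 0 (N - 1), y i :=
      Finset.sum_Ioc_consecutive _ (Nat.zero_le k) hk
    have h1 : ∑ i ∈ Ioc k (N - 1), y i ≤ ((N - 1 - k : ℕ) : ℝ) := by
      have := Finset.sum_le_card_nsmul (Ioc k (N - 1)) y 1
        (fun i hi => by
          obtain ⟨h1, h2⟩ := mem_Ioc.mp hi
          exact hy1 i (by omega) h2)
      simpa [Nat.card_Ioc] using this
    have hc : ((N - 1 - k : ℕ) : ℝ) = (N : ℝ) - 1 - k := by
      rw [Nat.cast_sub (by omega : k ≤ N - 1), Nat.cast_sub (by omega : 1 ≤ N)]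
      norm_num
    have e1 : Icc 1 k = Ioc 0 k := by ext i; simp only [mem_Icc, mem_Ioc]; omega
    have e2 : Icc 1 (N - 1) = Ioc 0 (N - 1) := by ext i; simp only [mem_Icc, mem_Ioc]; omega
    simp only [hs, hSdef, e1, e2]
    linarith [hsplit, h1, hc]
  have hNk : ∀ k ∈ Icc 1 (N - 1), (1:ℝ) ≤ (N : ℝ) - k := by
    intro k hk
    obtain ⟨h1, h2⟩ := mem_Icc.mp hk
    have h3 : (k : ℝ) ≤ ((N - 1 : ℕ) : ℝ) := Nat.cast_le.mpr h2
    rw [Nat.cast_sub (by omega)] at h3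
    push_cast at h3 ⊢
    linarith
  have hspos : ∀ k, k ≤ N - 1 → 0 < s k := fun k hk =>
    lt_of_lt_of_le zero_lt_one (hs1 k hk)
  have hlogstep : ∀ k, 1 ≤ k → k ≤ N - 1 → y k / s k ≤ Real.log (s k) - Real.log (s (k - 1)) := by
    intro k h1 h2
    have ha : 0 < s (k - 1) := hspos _ (by omega)
    have hb : s k = s (k - 1) + y k := hstep k h1
    have hy : 0 ≤ y k := hy0 k h1 h2
    have h3 := logdiff ha (by linarith : s (k - 1) ≤ s k)
    have hd : s k - s (k - 1) = y k := by linarith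
    rw [hd] at h3
    exact h3
  have htele1 : ∑ k ∈ Icc 1 (N - 1), y k / s k ≤ Real.log S := by
    calc ∑ k ∈ Icc 1 (N - 1), y k / s k
        ≤ ∑ k ∈ Icc 1 (N - 1), (Real.log (s k) - Real.log (s (k - 1))) := by
          apply Finset.sum_le_sum
          intro k hk
          obtain ⟨h1, h2⟩ := mem_Icc.mp hk
          exact hlogstep k h1 h2
      _ = Real.log (s (N - 1)) - Real.log (s 0) :=
          tele (fun k => Real.log (s k)) 1 (N - 1) le_rfl (by omega)
      _ = Real.log S := by
          have h0 : s 0 = 1 := by simp [hs]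
          rw [h0, Real.log_one, hSdef]
          ring
  have hlogS : 0 ≤ Real.log S := Real.log_nonneg hS1
  by_cases hS2 : S ≤ 2
  · -- easy case
    have hmax : max (S - 1) 1 = 1 := max_eq_right (by linarith)
    rw [hmax, div_one]
    have hb : ∑ k ∈ Icc 1 (N - 1), y k / (((N:ℝ) - k) * s k)
        ≤ ∑ k ∈ Icc 1 (N - 1), y k / s k := by
      apply Finset.sum_le_sum
      intro k hk
      obtain ⟨h1, h2⟩ := mem_Icc.mp hk
      have h3 := hNk k hk
      have h4 := hspos k h2
      have h5 : 0 ≤ y k := hy0 k h1 h2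
      apply div_le_div_of_nonneg_left h5 h4
      nlinarith [hNk k hk]
    linarith
  · push_neg at hS2
    have hmax : max (S - 1) 1 = S - 1 := max_eq_left (by linarith)
    rw [hmax]
    have hSm1 : (0:ℝ) < S - 1 := by linarith
    have hSN : S ≤ (N : ℝ) := by
      have h1 := Finset.sum_le_card_nsmul (Icc 1 (N-1)) y 1
        (fun i hi => by obtain ⟨a, b⟩ := mem_Icc.mp hi; exact hy1 i a b)
      rw [Nat.card_Icc] at h1
      have hc : ((N - 1 + 1 - 1 : ℕ) : ℝ) = (N:ℝ) - 1 := by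
        rw [show N - 1 + 1 - 1 = N - 1 by omega, Nat.cast_sub (by omega)]
        norm_num
      simp only [nsmul_eq_mul, mul_one] at h1
      rw [hc] at h1
      simp only [hSdef, hs]
      linarith
    set P : ℕ → Prop := fun k => ((N:ℝ) + 1 - S < (k:ℝ)) with hP
    rw [← Finset.sum_filter_add_sum_filter_not (Icc 1 (N-1)) P]
    -- part A : ¬ P
    have hApart : ∑ k ∈ (Icc 1 (N-1)).filter (fun k => ¬ P k),
        y k / (((N:ℝ) - k) * s k) ≤ Real.log S / (S - 1) := by
      calc ∑ k ∈ (Icc 1 (N-1)).filter (fun k => ¬ P k), y k / (((N:ℝ) - k) * s k)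
          ≤ ∑ k ∈ (Icc 1 (N-1)).filter (fun k => ¬ P k), (y k / s k) / (S - 1) := by
            apply Finset.sum_le_sum
            intro k hk
            obtain ⟨hkI, hkP⟩ := mem_filter.mp hk
            obtain ⟨h1, h2⟩ := mem_Icc.mp hkI
            have h3 : S - 1 ≤ (N:ℝ) - k := by
              simp only [hP, not_lt] at hkP
              linarith
            have h4 := hspos k h2
            have h5 : 0 ≤ y k := hy0 k h1 h2
            rw [div_div]
            rw [div_le_div_iff₀ (by nlinarith [hNk k hkI]) (by nlinarith)]
            nlinarith [mul_nonneg (mul_nonneg h5 h4.le)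
              (show (0:ℝ) ≤ ((N:ℝ) - k) - (S - 1) by linarith)]
        _ = (∑ k ∈ (Icc 1 (N-1)).filter (fun k => ¬ P k), y k / s k) / (S - 1) := by
            rw [← Finset.sum_div]
        _ ≤ (∑ k ∈ Icc 1 (N-1), y k / s k) / (S - 1) := by
            apply (div_le_div_iff_of_pos_right hSm1).mpr
            apply Finset.sum_le_sum_of_subset_of_nonneg (Finset.filter_subset _ _)
            intro i hi _
            obtain ⟨a, b⟩ := mem_Icc.mp hi
            exact div_nonneg (hy0 i a b) (hspos i b).le
        _ ≤ Real.log S / (S - 1) := (div_le_div_iff_of_pos_right hSm1).mpr htele1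
    have hcastm : ∀ j : ℕ, 1 ≤ j → ((j - 1 : ℕ) : ℝ) = (j : ℝ) - 1 := by
      intro j hj
      rw [Nat.cast_sub hj]
      norm_num
    -- the B part
    have hBne : (Icc 1 (N-1)).filter P |>.Nonempty := by
      refine ⟨N - 1, mem_filter.mpr ⟨mem_Icc.mpr ⟨by omega, le_rfl⟩, ?_⟩⟩
      simp only [hP]
      rw [hcastm N (by omega)]
      linarith
    set m := ((Icc 1 (N-1)).filter P).min' hBne with hm
    have hmB : m ∈ (Icc 1 (N-1)).filter P := Finset.min'_mem _ _
    obtain ⟨hmIcc, hmP⟩ := mem_filter.mp hmB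
    obtain ⟨hm1, hmN⟩ := mem_Icc.mp hmIcc
    have hmR : (N:ℝ) + 1 - S < m := hmP
    have hm2 : 2 ≤ m := by
      rcases Nat.lt_or_ge m 2 with h | h
      · exfalso
        have : m = 1 := by omega
        rw [this] at hmR
        push_cast at hmR
        linarith
      · exact h
    have hBeq : (Icc 1 (N-1)).filter P = Icc m (N-1) := by
      ext k
      simp only [mem_filter, mem_Icc]
      constructor
      · rintro ⟨⟨h1, h2⟩, hp⟩
        exact ⟨Finset.min'_le _ _ (mem_filter.mpr ⟨mem_Icc.mpr ⟨h1, h2⟩, hp⟩), h2⟩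
      · rintro ⟨h1, h2⟩
        refine ⟨⟨by omega, h2⟩, ?_⟩
        simp only [hP]
        have h3 : (m:ℝ) ≤ k := Nat.cast_le.mpr h1
        linarith
    have hBpart : ∑ k ∈ (Icc 1 (N-1)).filter P, y k / (((N:ℝ) - k) * s k)
        ≤ (1 + 2 * Real.log S) / (S - 1) := by
      rw [hBeq]
      have hbpos : ∀ k ∈ Icc m (N-1), (1:ℝ) < S - (N:ℝ) + k := by
        intro k hk
        obtain ⟨h1, h2⟩ := mem_Icc.mp hk
        have h3 : (m:ℝ) ≤ k := Nat.cast_le.mpr h1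
        linarith
      have hterm : ∀ k ∈ Icc m (N-1), y k / (((N:ℝ) - k) * s k)
          ≤ (1/(S+1)) * (1/((N:ℝ) - k) + 1/(S + 1 - (N:ℝ) + k)) := by
        intro k hk
        obtain ⟨h1, h2⟩ := mem_Icc.mp hk
        have hkIcc : k ∈ Icc 1 (N-1) := mem_Icc.mpr ⟨by omega, h2⟩
        have ha : (1:ℝ) ≤ (N:ℝ) - k := hNk k hkIcc
        have hb : (2:ℝ) < S + 1 - (N:ℝ) + k := by linarith [hbpos k hk]
        have hsk : S + 1 - (N:ℝ) + k ≤ s k := by linarith [hgap k h2]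
        have h5 : y k / (((N:ℝ) - k) * s k) ≤ 1 / (((N:ℝ) - k) * (S + 1 - (N:ℝ) + k)) := by
          apply div_le_div₀ (by norm_num) (hy1 k (by omega) h2) (by nlinarith) (by nlinarith)
        have h6 : 1 / (((N:ℝ) - k) * (S + 1 - (N:ℝ) + k))
            = (1/(S+1)) * (1/((N:ℝ) - k) + 1/(S + 1 - (N:ℝ) + k)) := by
          have hane : (N:ℝ) - k ≠ 0 := by linarith
          have hbne : S + 1 - (N:ℝ) + k ≠ 0 := by linarith
          have hSne : S + 1 ≠ 0 := by linarith
          field_simp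
          ring
        rw [h6] at h5
        exact h5
      have hsum1 : ∑ k ∈ Icc m (N-1), 1/((N:ℝ) - k) ≤ 1 + Real.log S := by
        have hsplit : ∑ k ∈ Icc m (N-1), 1/((N:ℝ) - k)
            = (∑ k ∈ Icc m (N-2), 1/((N:ℝ) - k)) + 1/((N:ℝ) - ((N-2+1 : ℕ):ℝ)) := by
          rw [show N - 1 = (N-2) + 1 by omega, Finset.sum_Icc_succ_top (show m ≤ (N-2)+1 by omega)]
        have htop : 1/((N:ℝ) - ((N-2+1 : ℕ):ℝ)) = 1 := by
          rw [show N - 2 + 1 = N - 1 by omega, hcastm N (by omega)]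
          norm_num
        have hmid : ∑ k ∈ Icc m (N-2), 1/((N:ℝ) - k) ≤ Real.log S := by
          by_cases hcase : m ≤ N - 2
          · have hub : ∑ k ∈ Icc m (N-2), 1/((N:ℝ) - k)
                ≤ ∑ k ∈ Icc m (N-2), ((fun j : ℕ => -Real.log ((N:ℝ) - 1 - j)) k
                    - (fun j : ℕ => -Real.log ((N:ℝ) - 1 - j)) (k-1)) := by
              apply Finset.sum_le_sum
              intro k hk
              obtain ⟨h1, h2⟩ := mem_Icc.mp hk
              have hkN2 : (k:ℝ) ≤ (N:ℝ) - 2 := by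
                have h3 : (k : ℝ) ≤ ((N - 2 : ℕ) : ℝ) := Nat.cast_le.mpr h2
                rw [Nat.cast_sub (by omega)] at h3
                push_cast at h3
                linarith
              have hcast : (((k-1:ℕ)):ℝ) = (k:ℝ) - 1 := hcastm k (by omega)
              simp only [hcast]
              have hld := logdiff (show (0:ℝ) < (N:ℝ) - 1 - k by linarith)
                (show (N:ℝ) - 1 - k ≤ (N:ℝ) - k by linarith)
              have he : ((N:ℝ) - k - ((N:ℝ) - 1 - k)) / ((N:ℝ) - k) = 1 / ((N:ℝ) - k) := by
                ring_nf
              rw [he] at hld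
              have he2 : (N:ℝ) - 1 - ((k:ℝ) - 1) = (N:ℝ) - k := by ring
              rw [he2]
              linarith [hld]
            have htel := tele (fun j : ℕ => -Real.log ((N:ℝ) - 1 - j)) m (N-2) (by omega) (by omega)
            rw [htel] at hub
            have hc1 : ((N - 2 : ℕ) : ℝ) = (N:ℝ) - 2 := by
              rw [Nat.cast_sub (by omega)]; norm_num
            have hc2 : ((m - 1 : ℕ) : ℝ) = (m:ℝ) - 1 := hcastm m (by omega)
            rw [hc1, hc2] at hub
            have he3 : (N:ℝ) - 1 - ((N:ℝ) - 2) = 1 := by ring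
            have he4 : (N:ℝ) - 1 - ((m:ℝ) - 1) = (N:ℝ) - m := by ring
            rw [he3, he4, Real.log_one] at hub
            have hNm : Real.log ((N:ℝ) - m) ≤ Real.log S := by
              apply Real.log_le_log (by
                have h3 : (m:ℝ) ≤ ((N-1:ℕ):ℝ) := Nat.cast_le.mpr hmN
                rw [hcastm N (by omega)] at h3
                linarith)
              linarith
            linarith [hub, hNm]
          · rw [Finset.Icc_eq_empty (by omega)]
            simp [hlogS]
        linarith [hsplit, htop, hmid]
      have hsum2 : ∑ k ∈ Icc m (N-1), 1/(S + 1 - (N:ℝ) + k) ≤ Real.log S := by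
        have hub : ∑ k ∈ Icc m (N-1), 1/(S + 1 - (N:ℝ) + k)
            ≤ ∑ k ∈ Icc m (N-1), ((fun j : ℕ => Real.log (S + 1 - (N:ℝ) + j)) k
                - (fun j : ℕ => Real.log (S + 1 - (N:ℝ) + j)) (k-1)) := by
          apply Finset.sum_le_sum
          intro k hk
          have hkb := hbpos k hk
          obtain ⟨h1, h2⟩ := mem_Icc.mp hk
          have hcast : (((k-1:ℕ)):ℝ) = (k:ℝ) - 1 := hcastm k (by omega)
          simp only [hcast]
          have hld := logdiff (show (0:ℝ) < S - (N:ℝ) + k by linarith)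
            (show S - (N:ℝ) + k ≤ S + 1 - (N:ℝ) + k by linarith)
          have he : (S + 1 - (N:ℝ) + k - (S - (N:ℝ) + k)) / (S + 1 - (N:ℝ) + k)
              = 1 / (S + 1 - (N:ℝ) + k) := by ring_nf
          rw [he] at hld
          have he2 : S + 1 - (N:ℝ) + ((k:ℝ) - 1) = S - (N:ℝ) + k := by ring
          rw [he2]
          linarith [hld]
        have htel := tele (fun j : ℕ => Real.log (S + 1 - (N:ℝ) + j)) m (N-1) (by omega) (by omega)
        rw [htel] at hub
        have hc1 : ((N - 1 : ℕ) : ℝ) = (N:ℝ) - 1 := hcastm N (by omega)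
        have hc2 : ((m - 1 : ℕ) : ℝ) = (m:ℝ) - 1 := hcastm m (by omega)
        rw [hc1, hc2] at hub
        have he3 : S + 1 - (N:ℝ) + ((N:ℝ) - 1) = S := by ring
        have he4 : S + 1 - (N:ℝ) + ((m:ℝ) - 1) = S - (N:ℝ) + m := by ring
        rw [he3, he4] at hub
        have hpos : 0 ≤ Real.log (S - (N:ℝ) + m) := Real.log_nonneg (by linarith [hmR])
        linarith [hub, hpos]
      have hSp : (0:ℝ) < S + 1 := by linarith
      calc ∑ k ∈ Icc m (N-1), y k / (((N:ℝ) - k) * s k)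
          ≤ ∑ k ∈ Icc m (N-1), (1/(S+1)) * (1/((N:ℝ) - k) + 1/(S + 1 - (N:ℝ) + k)) :=
            Finset.sum_le_sum hterm
        _ = (1/(S+1)) * ((∑ k ∈ Icc m (N-1), 1/((N:ℝ) - k))
              + ∑ k ∈ Icc m (N-1), 1/(S + 1 - (N:ℝ) + k)) := by
            rw [← Finset.mul_sum, Finset.sum_add_distrib]
        _ ≤ (1/(S+1)) * ((1 + Real.log S) + Real.log S) := by
            apply mul_le_mul_of_nonneg_left (by linarith [hsum1, hsum2]) (by positivity)
        _ = (1 + 2 * Real.log S) / (S + 1) := by ring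
        _ ≤ (1 + 2 * Real.log S) / (S - 1) := by
            apply div_le_div_of_nonneg_left (by linarith) hSm1 (by linarith)
    have hfinal : Real.log S / (S - 1) + (1 + 2 * Real.log S) / (S - 1)
        ≤ (4 * Real.log S + 5) / (S - 1) := by
      rw [← add_div]
      apply (div_le_div_iff_of_pos_right hSm1).mpr
      linarith
    linarith [hApart, hBpart, hfinal]
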